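/- For hypothesis classes H1, H2 on instance space X and H = H1 · H2 = {h1·h2 : h1 in H1, h2 in H2} (pointwise product of {-1,+1}-valued functions), for every t >= 0 and every depth-t X-valued tree x it holds that |S(H, x)| <= S(H1, t) * S(H2, t), where S(F, t) is the maximum of |S(F, y)| over depth-t trees y. -/

import Mathlib

/-- A depth-`t` `X`-valued tree: a family of maps `x_s : {-1,+1}^(s-1) → X`. -/
def XTree (X : Type*) (t : ℕ) := (s : Fin t) → (Fin s.val → ℤ) → X

/-- A sign path: a sequence with entries in `{-1,+1}`. -/
def IsSignPath {t : ℕ} (ε : Fin t → ℤ) : Prop := ∀ s, ε s = 1 ∨ ε s = -1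

/-- `S(H, x)`: the set of sign paths realized by some hypothesis `h ∈ H` along the tree `x`,
i.e. `ε_s = h (x_s (ε_1, …, ε_{s-1}))` for all `s`. -/
def realizedPaths {X : Type*} (H : Set (X → ℤ)) {t : ℕ} (x : XTree X t) :
    Set (Fin t → ℤ) :=
  {ε | IsSignPath ε ∧ ∃ h ∈ H, ∀ s : Fin t,
    ε s = h (x s (fun i => ε ⟨i.val, i.isLt.trans s.isLt⟩))}

/-- The tree shattering coefficient `S(H, t)`: the maximum of `|S(H, x)|` over
all depth-`t` `X`-valued trees `x`. -/
noncomputable def treeShatter {X : Type*} (H : Set (X → ℤ)) (t : ℕ) : ℕ :=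
  ⨆ x : XTree X t, (realizedPaths H x).ncard

lemma signset_finite (t : ℕ) : {ε : Fin t → ℤ | IsSignPath ε}.Finite := by
  have : {ε : Fin t → ℤ | IsSignPath ε} ⊆ Set.pi Set.univ (fun _ : Fin t => ({1, -1} : Set ℤ)) := by
    intro ε hε i _
    rcases hε i with h | h <;> simp [h]
  have hfin : (Set.pi Set.univ (fun _ : Fin t => ({1, -1} : Set ℤ))).Finite :=
    Set.Finite.pi (fun _ => Set.toFinite _)
  exact hfin.subset this

lemma realized_subset {X : Type*} (H : Set (X → ℤ)) {t : ℕ} (x : XTree X t) :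
    realizedPaths H x ⊆ {ε | IsSignPath ε} := fun _ h => h.1

lemma realized_finite {X : Type*} (H : Set (X → ℤ)) {t : ℕ} (x : XTree X t) :
    (realizedPaths H x).Finite := (signset_finite t).subset (realized_subset H x)

lemma bdd {X : Type*} (H : Set (X → ℤ)) (t : ℕ) :
    BddAbove (Set.range fun x : XTree X t => (realizedPaths H x).ncard) := by
  refine ⟨{ε : Fin t → ℤ | IsSignPath ε}.ncard, ?_⟩
  rintro n ⟨x, rfl⟩
  exact Set.ncard_le_ncard (realized_subset H x) (signset_finite t)

lemma ncard_le_shatter {X : Type*} (H : Set (X → ℤ)) {t : ℕ} (x : XTree X t) :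
    (realizedPaths H x).ncard ≤ treeShatter H t :=
  le_ciSup (bdd H t) x

lemma realized_mono {X : Type*} {H H' : Set (X → ℤ)} (hHH' : H ⊆ H') {t : ℕ} (x : XTree X t) :
    realizedPaths H x ⊆ realizedPaths H' x := by
  rintro ε ⟨h1, h, hH, h2⟩
  exact ⟨h1, h, hHH' hH, h2⟩

/-- subtree of a depth-(t+1) tree after first sign σ -/
def childTree {X : Type*} {t : ℕ} (x : XTree X (t+1)) (σ : ℤ) : XTree X t :=
  fun s e => x s.succ (fun i => if h : i.val = 0 then σ else e ⟨i.val - 1, by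
    have h1 := i.isLt; have h2 : (Fin.succ s).val = s.val + 1 := Fin.val_succ s; omega⟩)

def rootOf {X : Type*} {t : ℕ} (x : XTree X (t+1)) : X :=
  x 0 (fun i => absurd i.isLt (by simp))

/-- restriction of a class to hypotheses with value σ at a -/
def restr {X : Type*} (H : Set (X → ℤ)) (a : X) (σ : ℤ) : Set (X → ℤ) :=
  {h ∈ H | h a = σ}

def tailP {t : ℕ} (ε : Fin (t+1) → ℤ) : Fin t → ℤ := fun s => ε s.succ

def consP {t : ℕ} (σ : ℤ) (ε : Fin t → ℤ) : Fin (t+1) → ℤ :=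
  fun s => if h : s.val = 0 then σ else ε ⟨s.val - 1, by have := s.isLt; omega⟩

lemma tail_cons {t : ℕ} (σ : ℤ) (ε : Fin t → ℤ) : tailP (consP σ ε) = ε := by
  funext s
  simp [tailP, consP, Fin.val_succ]

lemma cons_zero {t : ℕ} (σ : ℤ) (ε : Fin t → ℤ) (s : Fin (t+1)) (hs : s.val = 0) :
    consP σ ε s = σ := by simp [consP, hs]

/-- Lemma A: tail maps realized paths starting with σ into realized paths of
the restricted class on the child tree. -/
lemma tail_mem {X : Type*} {t : ℕ} (H : Set (X → ℤ)) (x : XTree X (t+1))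
    (σ : ℤ) (ε : Fin (t+1) → ℤ) (hε : ε ∈ realizedPaths H x) (h0 : ε 0 = σ) :
    tailP ε ∈ realizedPaths (restr H (rootOf x) σ) (childTree x σ) := by
  obtain ⟨hsign, h, hH, hcond⟩ := hε
  have hroot : h (rootOf x) = σ := by
    rw [← h0, hcond 0]
    congr 1
    unfold rootOf
    congr 1
    funext i
    exact absurd i.isLt (by simp)
  refine ⟨fun s => hsign s.succ, h, ⟨hH, hroot⟩, fun s => ?_⟩
  show ε s.succ = _
  rw [hcond s.succ]
  congr 1
  unfold childTree
  congr 1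
  funext i
  by_cases hi : i.val = 0
  · rw [dif_pos hi]
    have he : (⟨i.val, i.isLt.trans s.succ.isLt⟩ : Fin (t+1)) = 0 := Fin.ext (by simp [hi])
    rw [he, h0]
  · rw [dif_neg hi]
    show _ = tailP ε _
    simp only [tailP]
    congr 1
    apply Fin.ext
    have h1 := i.isLt
    have h2 : (Fin.succ s).val = s.val + 1 := Fin.val_succ s
    simp [Fin.val_succ]
    omega

lemma split_card {X : Type*} {t : ℕ} (H : Set (X → ℤ)) (x : XTree X (t+1)) :
    (realizedPaths H x).ncard ≤
      (realizedPaths (restr H (rootOf x) 1) (childTree x 1)).ncard +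
      (realizedPaths (restr H (rootOf x) (-1)) (childTree x (-1))).ncard := by
  set A := {ε ∈ realizedPaths H x | ε 0 = 1}
  set B := {ε ∈ realizedPaths H x | ε 0 = -1}
  have hAB : realizedPaths H x = A ∪ B := by
    ext ε
    constructor
    · intro hε
      rcases hε.1 0 with h | h
      · exact Or.inl ⟨hε, h⟩
      · exact Or.inr ⟨hε, h⟩
    · rintro (⟨hε, _⟩ | ⟨hε, _⟩) <;> exact hε
  have hinj : ∀ σ : ℤ, Set.InjOn tailP {ε ∈ realizedPaths H x | ε 0 = σ} := by
    intro σ ε hε ε' hε' hT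
    funext s
    by_cases hs : s.val = 0
    · rw [show s = 0 from Fin.ext hs, hε.2, hε'.2]
    · have : s = (Fin.succ ⟨s.val - 1, by have := s.isLt; omega⟩ : Fin (t+1)) := by
        apply Fin.ext; simp [Fin.val_succ]; omega
      rw [this]
      exact congrFun hT _
  have himg : ∀ σ : ℤ, tailP '' {ε ∈ realizedPaths H x | ε 0 = σ} ⊆
      realizedPaths (restr H (rootOf x) σ) (childTree x σ) := by
    rintro σ _ ⟨ε, ⟨hε, h0⟩, rfl⟩
    exact tail_mem H x σ ε hε h0
  have hA : A.ncard ≤ (realizedPaths (restr H (rootOf x) 1) (childTree x 1)).ncard := by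
    rw [← Set.ncard_image_of_injOn (hinj 1)]
    exact Set.ncard_le_ncard (himg 1) (realized_finite _ _)
  have hB : B.ncard ≤ (realizedPaths (restr H (rootOf x) (-1)) (childTree x (-1))).ncard := by
    rw [← Set.ncard_image_of_injOn (hinj (-1))]
    exact Set.ncard_le_ncard (himg (-1)) (realized_finite _ _)
  calc (realizedPaths H x).ncard = (A ∪ B).ncard := by rw [hAB]
    _ ≤ A.ncard + B.ncard := Set.ncard_union_le A B
    _ ≤ _ := Nat.add_le_add hA hB

/-- combined tree with root a, +1-subtree y and -1-subtree z -/
def combTree {X : Type*} {t : ℕ} (a : X) (y z : XTree X t) : XTree X (t+1) :=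
  fun s e =>
    if h : s.val = 0 then a
    else
      let s' : Fin t := ⟨s.val - 1, by have := s.isLt; omega⟩
      let e' : Fin s'.val → ℤ := fun i => e ⟨i.val + 1, by
        have h1 := i.isLt; have h2 : s'.val = s.val - 1 := rfl; omega⟩
      if e ⟨0, by omega⟩ = 1 then y s' e' else z s' e'

lemma cons_mem {X : Type*} {t : ℕ} (H : Set (X → ℤ)) (a : X) (y z : XTree X t)
    (σ : ℤ) (hσ : σ = 1 ∨ σ = -1) (ε : Fin t → ℤ)
    (hε : ε ∈ realizedPaths (restr H a σ) (if σ = 1 then y else z)) :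
    consP σ ε ∈ realizedPaths H (combTree a y z) := by
  obtain ⟨hsign, h, ⟨hH, ha⟩, hcond⟩ := hε
  refine ⟨?_, h, hH, ?_⟩
  · intro s
    by_cases hs : s.val = 0
    · simp [consP, hs, hσ]
    · simp only [consP, dif_neg hs]
      exact hsign _
  · intro s
    by_cases hs : s.val = 0
    · rw [cons_zero σ ε s hs]
      rw [show (combTree a y z) s (fun i => consP σ ε ⟨i.val, i.isLt.trans s.isLt⟩) = a
        from dif_pos hs]
      exact ha.symm
    · have hpre0 : (fun i : Fin s.val => consP σ ε ⟨i.val, i.isLt.trans s.isLt⟩)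
          ⟨0, by omega⟩ = σ := by
        simp [consP]
      set s' : Fin t := ⟨s.val - 1, by have := s.isLt; omega⟩ with hs'
      have hval : s'.val = s.val - 1 := rfl
      have hLHS : consP σ ε s = ε s' := by
        simp only [consP, dif_neg hs]
        rfl
      have hRHS : (combTree a y z) s (fun i => consP σ ε ⟨i.val, i.isLt.trans s.isLt⟩) =
          (if σ = 1 then y else z) s'
            (fun i => ε ⟨i.val, i.isLt.trans s'.isLt⟩) := by
        show dite _ _ _ = _
        rw [dif_neg hs]
        have he' : (fun i : Fin s'.val =>
            (fun j : Fin s.val => consP σ ε ⟨j.val, j.isLt.trans s.isLt⟩)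
              ⟨i.val + 1, by have h1 := i.isLt; omega⟩) =
            (fun i : Fin s'.val => ε ⟨i.val, i.isLt.trans s'.isLt⟩) := by
          funext i
          simp only [consP, dif_neg (Nat.succ_ne_zero i.val)]
          congr 1
        rcases hσ with h1 | h1
        · rw [if_pos (h1 ▸ hpre0), if_pos h1]
          rw [← he']
        · rw [if_neg (by rw [hpre0, h1]; norm_num), if_neg (by rw [h1]; norm_num)]
          rw [← he']
      rw [hLHS, hRHS]
      exact hcond s'

lemma cons_injOn {t : ℕ} (σ : ℤ) (S : Set (Fin t → ℤ)) : Set.InjOn (consP σ) S := by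
  intro ε _ ε' _ hc
  have := congrArg tailP hc
  rwa [tail_cons, tail_cons] at this

lemma comb_card {X : Type*} {t : ℕ} (H : Set (X → ℤ)) (a : X) (y z : XTree X t) :
    (realizedPaths (restr H a 1) y).ncard + (realizedPaths (restr H a (-1)) z).ncard ≤
      (realizedPaths H (combTree a y z)).ncard := by
  set A := consP (1:ℤ) '' realizedPaths (restr H a 1) y with hA
  set B := consP (-1:ℤ) '' realizedPaths (restr H a (-1)) z with hB
  have hAsub : A ⊆ realizedPaths H (combTree a y z) := by
    rintro _ ⟨ε, hε, rfl⟩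
    exact cons_mem H a y z 1 (Or.inl rfl) ε (by simpa using hε)
  have hBsub : B ⊆ realizedPaths H (combTree a y z) := by
    rintro _ ⟨ε, hε, rfl⟩
    refine cons_mem H a y z (-1) (Or.inr rfl) ε ?_
    rw [if_neg (by norm_num)]
    exact hε
  have hdisj : Disjoint A B := by
    rw [Set.disjoint_left]
    rintro _ ⟨ε, _, rfl⟩ ⟨ε', _, hc⟩
    have h1 : consP (-1:ℤ) ε' 0 = -1 := cons_zero _ _ _ rfl
    have h2 : consP (1:ℤ) ε 0 = 1 := cons_zero _ _ _ rfl
    rw [← hc, h1] at h2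
    norm_num at h2
  have hfin : (realizedPaths H (combTree a y z)).Finite := realized_finite _ _
  calc (realizedPaths (restr H a 1) y).ncard + (realizedPaths (restr H a (-1)) z).ncard
      = A.ncard + B.ncard := by
        rw [hA, hB, Set.ncard_image_of_injOn (cons_injOn _ _),
          Set.ncard_image_of_injOn (cons_injOn _ _)]
    _ = (A ∪ B).ncard := (Set.ncard_union_eq hdisj (hfin.subset hAsub) (hfin.subset hBsub)).symm
    _ ≤ _ := Set.ncard_le_ncard (Set.union_subset hAsub hBsub) hfin

lemma shatter_combine {X : Type*} [Nonempty X] {t : ℕ} (H : Set (X → ℤ)) (a : X) :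
    treeShatter (restr H a 1) t + treeShatter (restr H a (-1)) t ≤ treeShatter H (t+1) := by
  have hne : Nonempty (XTree X t) := ⟨fun _ _ => Classical.arbitrary X⟩
  obtain ⟨y, hy⟩ : ∃ y : XTree X t,
      (realizedPaths (restr H a 1) y).ncard = treeShatter (restr H a 1) t := by
    have := Nat.sSup_mem (Set.range_nonempty _) (bdd (restr H a 1) t)
    obtain ⟨y, hy⟩ := this
    exact ⟨y, hy⟩
  obtain ⟨z, hz⟩ : ∃ z : XTree X t,
      (realizedPaths (restr H a (-1)) z).ncard = treeShatter (restr H a (-1)) t := by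
    have := Nat.sSup_mem (Set.range_nonempty _) (bdd (restr H a (-1)) t)
    obtain ⟨z, hz⟩ := this
    exact ⟨z, hz⟩
  calc treeShatter (restr H a 1) t + treeShatter (restr H a (-1)) t
      = (realizedPaths (restr H a 1) y).ncard + (realizedPaths (restr H a (-1)) z).ncard := by
        rw [hy, hz]
    _ ≤ (realizedPaths H (combTree a y z)).ncard := comb_card H a y z
    _ ≤ treeShatter H (t+1) := ncard_le_shatter H _

def prodC {X : Type*} (H1 H2 : Set (X → ℤ)) : Set (X → ℤ) :=
  {h | ∃ h1 ∈ H1, ∃ h2 ∈ H2, h = fun a => h1 a * h2 a}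

lemma restr_prod_subset {X : Type*} (H1 H2 : Set (X → ℤ))
    (hs1 : ∀ h ∈ H1, ∀ a : X, h a = 1 ∨ h a = -1) (a : X) (σ : ℤ) :
    restr (prodC H1 H2) a σ ⊆
      prodC (restr H1 a 1) (restr H2 a σ) ∪ prodC (restr H1 a (-1)) (restr H2 a (-σ)) := by
  rintro h ⟨⟨h1, hh1, h2, hh2, rfl⟩, hval⟩
  simp only at hval
  rcases hs1 h1 hh1 a with h1a | h1a
  · left
    refine ⟨h1, ⟨hh1, h1a⟩, h2, ⟨hh2, ?_⟩, rfl⟩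
    rw [h1a] at hval; linarith
  · right
    refine ⟨h1, ⟨hh1, h1a⟩, h2, ⟨hh2, ?_⟩, rfl⟩
    rw [h1a] at hval; linarith

lemma realized_union_subset {X : Type*} (A B : Set (X → ℤ)) {t : ℕ} (x : XTree X t) :
    realizedPaths (A ∪ B) x ⊆ realizedPaths A x ∪ realizedPaths B x := by
  rintro ε ⟨hsign, h, (hA | hB), hcond⟩
  · exact Or.inl ⟨hsign, h, hA, hcond⟩
  · exact Or.inr ⟨hsign, h, hB, hcond⟩

lemma restr_signs {X : Type*} {H : Set (X → ℤ)}
    (hs : ∀ h ∈ H, ∀ a : X, h a = 1 ∨ h a = -1) (b : X) (σ : ℤ) :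
    ∀ h ∈ restr H b σ, ∀ a : X, h a = 1 ∨ h a = -1 :=
  fun h hh a => hs h hh.1 a

lemma main_aux {X : Type*} : ∀ (t : ℕ) (H1 H2 : Set (X → ℤ)),
    (∀ h ∈ H1, ∀ a : X, h a = 1 ∨ h a = -1) →
    (∀ h ∈ H2, ∀ a : X, h a = 1 ∨ h a = -1) →
    ∀ x : XTree X t,
    (realizedPaths (prodC H1 H2) x).ncard ≤ treeShatter H1 t * treeShatter H2 t := by
  intro t
  induction t with
  | zero =>
    intro H1 H2 _ _ x
    rcases Set.eq_empty_or_nonempty (realizedPaths (prodC H1 H2) x) with he | ⟨ε, hε⟩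
    · simp [he]
    · obtain ⟨_, h, ⟨h1, hh1, h2, hh2, _⟩, _⟩ := hε
      have hle1 : (realizedPaths (prodC H1 H2) x).ncard ≤ 1 :=
        Set.ncard_le_one (realized_finite _ _) |>.mpr
          (fun a _ b _ => funext fun s => s.elim0)
      have hone : ∀ (H : Set (X → ℤ)), H.Nonempty → 1 ≤ treeShatter H 0 := by
        rintro H ⟨h, hh⟩
        have hmem : ε ∈ realizedPaths H x :=
          ⟨fun s => s.elim0, h, hh, fun s => s.elim0⟩
        have : 1 ≤ (realizedPaths H x).ncard :=
          (Set.ncard_pos (realized_finite _ _)).mpr ⟨ε, hmem⟩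
        exact this.trans (ncard_le_shatter H x)
      calc (realizedPaths (prodC H1 H2) x).ncard ≤ 1 := hle1
        _ ≤ treeShatter H1 0 * treeShatter H2 0 :=
          Nat.one_le_iff_ne_zero.mpr (Nat.mul_ne_zero
            (Nat.one_le_iff_ne_zero.mp (hone H1 ⟨h1, hh1⟩))
            (Nat.one_le_iff_ne_zero.mp (hone H2 ⟨h2, hh2⟩)))
  | succ t ih =>
    intro H1 H2 hs1 hs2 x
    have hX : Nonempty X := ⟨rootOf x⟩
    set a := rootOf x with ha
    -- abbreviations
    set T1p := treeShatter (restr H1 a 1) t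
    set T1m := treeShatter (restr H1 a (-1)) t
    set T2p := treeShatter (restr H2 a 1) t
    set T2m := treeShatter (restr H2 a (-1)) t
    have key : ∀ σ : ℤ, σ = 1 ∨ σ = -1 → ∀ x' : XTree X t,
        (realizedPaths (restr (prodC H1 H2) a σ) x').ncard ≤
          treeShatter (restr H1 a 1) t * treeShatter (restr H2 a σ) t +
          treeShatter (restr H1 a (-1)) t * treeShatter (restr H2 a (-σ)) t := by
      intro σ _ x'
      have hsub := restr_prod_subset H1 H2 hs1 a σ
      have hmono := realized_mono hsub x'
      have hun := realized_union_subset (prodC (restr H1 a 1) (restr H2 a σ))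
        (prodC (restr H1 a (-1)) (restr H2 a (-σ))) x'
      have hfin : (realizedPaths (prodC (restr H1 a 1) (restr H2 a σ)) x' ∪
          realizedPaths (prodC (restr H1 a (-1)) (restr H2 a (-σ))) x').Finite :=
        (realized_finite _ _).union (realized_finite _ _)
      calc (realizedPaths (restr (prodC H1 H2) a σ) x').ncard
          ≤ (realizedPaths (prodC (restr H1 a 1) (restr H2 a σ)) x' ∪
              realizedPaths (prodC (restr H1 a (-1)) (restr H2 a (-σ))) x').ncard :=
            Set.ncard_le_ncard (hmono.trans hun) hfin
        _ ≤ (realizedPaths (prodC (restr H1 a 1) (restr H2 a σ)) x').ncard +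
            (realizedPaths (prodC (restr H1 a (-1)) (restr H2 a (-σ))) x').ncard :=
            Set.ncard_union_le _ _
        _ ≤ _ := Nat.add_le_add
            (ih (restr H1 a 1) (restr H2 a σ) (restr_signs hs1 a 1) (restr_signs hs2 a σ) x')
            (ih (restr H1 a (-1)) (restr H2 a (-σ)) (restr_signs hs1 a (-1))
              (restr_signs hs2 a (-σ)) x')
    calc (realizedPaths (prodC H1 H2) x).ncard
        ≤ (realizedPaths (restr (prodC H1 H2) a 1) (childTree x 1)).ncard +
          (realizedPaths (restr (prodC H1 H2) a (-1)) (childTree x (-1))).ncard :=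
          split_card _ x
      _ ≤ (T1p * T2p + T1m * T2m) + (T1p * T2m + T1m * T2p) := by
          have k1 := key 1 (Or.inl rfl) (childTree x 1)
          have k2 := key (-1) (Or.inr rfl) (childTree x (-1))
          norm_num at k1 k2
          exact Nat.add_le_add k1 k2
      _ = (T1p + T1m) * (T2p + T2m) := by ring
      _ ≤ treeShatter H1 (t+1) * treeShatter H2 (t+1) :=
          Nat.mul_le_mul (shatter_combine H1 a) (shatter_combine H2 a)

theorem stmt10 {X : Type*} (H1 H2 : Set (X → ℤ))
    (hs1 : ∀ h ∈ H1, ∀ a : X, h a = 1 ∨ h a = -1)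
    (hs2 : ∀ h ∈ H2, ∀ a : X, h a = 1 ∨ h a = -1)
    (t : ℕ) (x : XTree X t) :
    (realizedPaths {h | ∃ h1 ∈ H1, ∃ h2 ∈ H2, h = fun a => h1 a * h2 a} x).ncard ≤
      treeShatter H1 t * treeShatter H2 t := by
  exact main_aux t H1 H2 hs1 hs2 x
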